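/- For a polynomial φ(x) ∈ ℚ[x₁,…,xₙ] with φ ≠ 0, the polynomial φ(∂x)φ(x) (apply the differential operator obtained by substituting ∂/∂x_i for x_i in φ, to φ itself) has constant term equal to a positive rational number; in fact, if φ is written in the monomial basis with coefficients c_m on monomial m = ∏ x_i^{m_i}, the constant term equals ∑_m c_m² · ∏_i (m_i!). In particular φ(∂x)φ(x) ≠ 0. -/

import Mathlib

open MvPolynomial

/-- Apply the monomial differential operator `∂^m = ∏ᵢ (∂/∂xᵢ)^{mᵢ}` to `p`. -/
noncomputable def applyMono (n : ℕ) (m : Fin n →₀ ℕ) (p : MvPolynomial (Fin n) ℚ) :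
    MvPolynomial (Fin n) ℚ :=
  (List.finRange n).foldr (fun i q => (⇑(pderiv i))^[m i] q) p

/-- The operator `φ(∂x)` applied to `p`:  `∑_m c_m ∂^m p` where `φ = ∑_m c_m x^m`. -/
noncomputable def diffOp (n : ℕ) (φ p : MvPolynomial (Fin n) ℚ) : MvPolynomial (Fin n) ℚ :=
  ∑ m ∈ φ.support, φ.coeff m • applyMono n m p

lemma iter_pderiv_monomial {n : ℕ} (i : Fin n) (k : ℕ) (d : Fin n →₀ ℕ) (c : ℚ) :
    (⇑(pderiv i))^[k] (monomial d c) =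
      monomial (d - Finsupp.single i k) (c * (Nat.descFactorial (d i) k : ℚ)) := by
  induction k with
  | zero => simp
  | succ k ih =>
      rw [Function.iterate_succ', Function.comp_apply, ih, pderiv_monomial]
      congr 1
      · rw [tsub_tsub, ← Finsupp.single_add]
      · rw [Finsupp.tsub_apply, Finsupp.single_apply, if_pos rfl,
          Nat.descFactorial_succ]
        push_cast
        ring

lemma iter_pderiv_add {n : ℕ} (i : Fin n) (k : ℕ) (p q : MvPolynomial (Fin n) ℚ) :
    (⇑(pderiv i))^[k] (p + q) = (⇑(pderiv i))^[k] p + (⇑(pderiv i))^[k] q := by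
  induction k generalizing p q with
  | zero => simp
  | succ k ih => simp [Function.iterate_succ', ih]

lemma iter_pderiv_zero {n : ℕ} (i : Fin n) (k : ℕ) :
    (⇑(pderiv i))^[k] (0 : MvPolynomial (Fin n) ℚ) = 0 := by
  induction k with
  | zero => rfl
  | succ k ih => simp [Function.iterate_succ', ih]

lemma applyMono_add {n : ℕ} (m : Fin n →₀ ℕ) (p q : MvPolynomial (Fin n) ℚ) :
    applyMono n m (p + q) = applyMono n m p + applyMono n m q := by
  unfold applyMono
  induction List.finRange n generalizing p q with
  | nil => rfl
  | cons i l ih => simp [List.foldr_cons, ih, iter_pderiv_add]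

lemma applyMono_zero {n : ℕ} (m : Fin n →₀ ℕ) :
    applyMono n m (0 : MvPolynomial (Fin n) ℚ) = 0 := by
  unfold applyMono
  induction List.finRange n with
  | nil => rfl
  | cons i l ih => simp [List.foldr_cons, ih, iter_pderiv_zero]

/-- `applyMono` as an additive monoid hom. -/
noncomputable def applyMonoHom (n : ℕ) (m : Fin n →₀ ℕ) :
    MvPolynomial (Fin n) ℚ →+ MvPolynomial (Fin n) ℚ where
  toFun := applyMono n m
  map_zero' := applyMono_zero m
  map_add' := applyMono_add m

lemma foldr_monomial {n : ℕ} (m d : Fin n →₀ ℕ) (c : ℚ) (l : List (Fin n)) (hl : l.Nodup) :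
    l.foldr (fun i q => (⇑(pderiv i))^[m i] q) (monomial d c) =
      monomial (d - ∑ i ∈ l.toFinset, Finsupp.single i (m i))
        (c * ∏ i ∈ l.toFinset, (Nat.descFactorial (d i) (m i) : ℚ)) := by
  induction l with
  | nil => simp
  | cons i l ih =>
      have hi : i ∉ l := (List.nodup_cons.mp hl).1
      have hl' : l.Nodup := (List.nodup_cons.mp hl).2
      have hi' : i ∉ l.toFinset := by simpa using hi
      rw [List.foldr_cons, ih hl', iter_pderiv_monomial]
      rw [List.toFinset_cons, Finset.sum_insert hi', Finset.prod_insert hi']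
      congr 1
      · rw [tsub_tsub, add_comm]
      · have hS : (∑ j ∈ l.toFinset, Finsupp.single j (m j)) i = 0 := by
          rw [Finsupp.finset_sum_apply]
          refine Finset.sum_eq_zero fun j hj => ?_
          rw [Finsupp.single_apply, if_neg]
          rintro rfl; exact hi' hj
        rw [Finsupp.tsub_apply, hS, Nat.sub_zero]
        ring

lemma coeff0_applyMono {n : ℕ} (m : Fin n →₀ ℕ) (φ : MvPolynomial (Fin n) ℚ) :
    MvPolynomial.coeff 0 (applyMono n m φ) =
      φ.coeff m * ∏ i : Fin n, (Nat.factorial (m i) : ℚ) := by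
  conv_lhs => rw [φ.as_sum]
  have : applyMono n m (∑ v ∈ φ.support, monomial v (coeff v φ)) =
      ∑ v ∈ φ.support, applyMono n m (monomial v (coeff v φ)) :=
    map_sum (applyMonoHom n m) _ _
  rw [this, MvPolynomial.coeff_sum]
  have key : ∀ v : Fin n →₀ ℕ, ∀ c : ℚ,
      applyMono n m (monomial v c) =
        monomial (v - m) (c * ∏ i : Fin n, (Nat.descFactorial (v i) (m i) : ℚ)) := by
    intro v c
    unfold applyMono
    rw [foldr_monomial m v c _ (List.nodup_finRange n)]
    rw [List.toFinset_finRange, Finsupp.univ_sum_single]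
  rw [Finset.sum_eq_single m]
  · by_cases hm : m ∈ φ.support
    · rw [key, MvPolynomial.coeff_monomial, if_pos (by simp), ]
      simp [Nat.descFactorial_self]
    · rw [MvPolynomial.notMem_support_iff.mp hm]
      simp [applyMono_zero]
  · intro d _ hdm
    rw [key, MvPolynomial.coeff_monomial]
    by_cases hsub : d - m = 0
    · rw [if_pos hsub]
      have hle : ∀ i, d i ≤ m i := fun i => by
        have := congrArg (fun f : Fin n →₀ ℕ => f i) hsub
        simpa [Finsupp.tsub_apply] using Nat.sub_eq_zero_iff_le.mp this
      have : ∃ i, d i < m i := by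
        by_contra h
        push_neg at h
        exact hdm (Finsupp.ext fun i => le_antisymm (hle i) (h i))
      obtain ⟨i, hi⟩ := this
      have : (Nat.descFactorial (d i) (m i) : ℚ) = 0 := by
        rw [Nat.descFactorial_eq_zero_iff_lt.mpr hi]; norm_num
      rw [Finset.prod_eq_zero (Finset.mem_univ i) this, mul_zero]
    · rw [if_neg hsub]
  · intro hm
    rw [MvPolynomial.notMem_support_iff.mp hm]
    simp [applyMono_zero]

/-- The constant term of `φ(∂x)φ(x)` equals `∑_m c_m² ∏ᵢ (mᵢ)!`, which is positive
whenever `φ ≠ 0`; in particular `φ(∂x)φ(x) ≠ 0`. -/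
theorem stmt4 (n : ℕ) (φ : MvPolynomial (Fin n) ℚ) (hφ : φ ≠ 0) :
    MvPolynomial.coeff 0 (diffOp n φ φ) =
      (∑ m ∈ φ.support, (φ.coeff m) ^ 2 * ∏ i : Fin n, (Nat.factorial (m i) : ℚ)) ∧
    0 < MvPolynomial.coeff 0 (diffOp n φ φ) ∧ diffOp n φ φ ≠ 0 := by
  have heq : MvPolynomial.coeff 0 (diffOp n φ φ) =
      ∑ m ∈ φ.support, (φ.coeff m) ^ 2 * ∏ i : Fin n, (Nat.factorial (m i) : ℚ) := by
    unfold diffOp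
    rw [MvPolynomial.coeff_sum]
    refine Finset.sum_congr rfl fun m _ => ?_
    rw [MvPolynomial.coeff_smul, coeff0_applyMono]
    simp [smul_eq_mul]
    ring
  have hpos : 0 < MvPolynomial.coeff 0 (diffOp n φ φ) := by
    rw [heq]
    refine Finset.sum_pos (fun m hm => ?_) (MvPolynomial.support_nonempty.mpr hφ)
    have hc : φ.coeff m ≠ 0 := MvPolynomial.mem_support_iff.mp hm
    have h1 : (0 : ℚ) < (φ.coeff m) ^ 2 := by positivity
    have h2 : (0 : ℚ) < ∏ i : Fin n, (Nat.factorial (m i) : ℚ) := by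
      refine Finset.prod_pos fun i _ => ?_
      exact_mod_cast Nat.factorial_pos (m i)
    exact mul_pos h1 h2
  exact ⟨heq, hpos, fun h => by simp [h] at hpos⟩
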